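/- Let k be an algebraically closed field and let σ₁, σ₂ ∈ k[t] be nonconstant tamely ramified polynomials of degrees d₁, d₂ with d₁ ≥ 14·d₂. Let ω = f·(dt)^ν be a semi-invariant form of weight ν ≥ 1 for (σ₁, σ₂) whose conductor equals 2, say with ord_{y₁} f = e and ord_{y₂} f = e′ at the two distinct points y₁, y₂ ∈ k of its support, and suppose gcd(e, e′) = 1 (as holds when ω is a primitive). Then e = e′ = −1; consequently ν = 2 and f = c·((t − y₁)(t − y₂))^{−1} for some c ∈ k∖{0}. -/

import Mathlib

open Polynomial

/-- Substitution of a polynomial `σ` into a rational function `h`: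
if `h = p/q` then `h ∘ σ = (p ∘ σ)/(q ∘ σ)`. -/
noncomputable def ratComp {k : Type*} [Field k] (h : RatFunc k) (σ : k[X]) : RatFunc k :=
  algebraMap k[X] (RatFunc k) (h.num.comp σ) / algebraMap k[X] (RatFunc k) (h.denom.comp σ)

/-- The order of a rational function `f` at a point `a` of the affine line. -/
noncomputable def ordAt {k : Type*} [Field k] (f : RatFunc k) (a : k) : ℤ :=
  (f.num.rootMultiplicity a : ℤ) - (f.denom.rootMultiplicity a : ℤ)

/-- `f·(dt)^ν` is a semi-invariant form of weight `ν` for the correspondence `(σ₁, σ₂)`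
of the affine line: `f ≠ 0` and `σ₁*ω = λ·σ₂*ω` for some constant `λ ≠ 0`, i.e.
`(f∘σ₁)·(σ₁')^ν = λ·(f∘σ₂)·(σ₂')^ν`. -/
def SemiInvariant {k : Type*} [Field k] (σ₁ σ₂ : k[X]) (f : RatFunc k) (ν : ℤ) : Prop :=
  f ≠ 0 ∧ ∃ lam : k, lam ≠ 0 ∧
    ratComp f σ₁ * (algebraMap k[X] (RatFunc k) (derivative σ₁)) ^ ν
      = RatFunc.C lam *
        (ratComp f σ₂ * (algebraMap k[X] (RatFunc k) (derivative σ₂)) ^ ν)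

/-- A nonconstant polynomial `σ` is tamely ramified if `char k` does not divide its degree
and every root of `σ - c`, for every `c`, has multiplicity prime to `char k`. -/
def TamelyRamified {k : Type*} [Field k] (σ : k[X]) : Prop :=
  ¬ (ringChar k ∣ σ.natDegree) ∧
    ∀ c a : k, (σ - C c).IsRoot a → ¬ (ringChar k ∣ (σ - C c).rootMultiplicity a)


section Aux
variable {k : Type*} [Field k]

lemma ordAt_spec {p q : k[X]} (hp : p ≠ 0) (hq : q ≠ 0) {f : RatFunc k}
    (hf : algebraMap k[X] (RatFunc k) q * f = algebraMap k[X] (RatFunc k) p) (a : k) :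
    ordAt f a = (p.rootMultiplicity a : ℤ) - (q.rootMultiplicity a : ℤ) := by
  have hf0 : f ≠ 0 := by
    rintro rfl
    rw [mul_zero] at hf
    exact RatFunc.algebraMap_ne_zero hp hf.symm
  have hnum : f.num ≠ 0 := RatFunc.num_ne_zero hf0
  have key : q * f.num = p * f.denom := by
    apply RatFunc.algebraMap_injective k
    nth_rewrite 1 [← RatFunc.num_div_denom f] at hf
    rw [← mul_div_assoc, div_eq_iff (RatFunc.algebraMap_ne_zero f.denom_ne_zero)] at hf
    rw [map_mul, map_mul]
    exact hf
  have := congrArg (rootMultiplicity a) key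
  rw [rootMultiplicity_mul (mul_ne_zero hq hnum),
      rootMultiplicity_mul (mul_ne_zero hp f.denom_ne_zero)] at this
  unfold ordAt
  omega

lemma ordAt_algebraMap {p : k[X]} (hp : p ≠ 0) (a : k) :
    ordAt (algebraMap k[X] (RatFunc k) p) a = p.rootMultiplicity a := by
  rw [ordAt_spec hp (one_ne_zero) (by rw [map_one, one_mul]) a]
  simp [rootMultiplicity_eq_zero (show ¬ IsRoot 1 a by simp [IsRoot])]

lemma algebraMap_denom_mul (f : RatFunc k) :
    algebraMap k[X] (RatFunc k) f.denom * f = algebraMap k[X] (RatFunc k) f.num := by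
  calc algebraMap k[X] (RatFunc k) f.denom * f
      = algebraMap k[X] (RatFunc k) f.denom *
        (algebraMap k[X] (RatFunc k) f.num / algebraMap k[X] (RatFunc k) f.denom) := by
        rw [RatFunc.num_div_denom]
    _ = algebraMap k[X] (RatFunc k) f.num := by
        rw [← mul_div_assoc, mul_comm, mul_div_assoc,
          div_self (RatFunc.algebraMap_ne_zero f.denom_ne_zero), mul_one]

lemma ordAt_mul {f g : RatFunc k} (hf : f ≠ 0) (hg : g ≠ 0) (a : k) :
    ordAt (f * g) a = ordAt f a + ordAt g a := by
  have h1 : algebraMap k[X] (RatFunc k) (f.denom * g.denom) * (f * g)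
      = algebraMap k[X] (RatFunc k) (f.num * g.num) := by
    rw [map_mul, map_mul, show algebraMap k[X] (RatFunc k) f.denom *
      algebraMap k[X] (RatFunc k) g.denom * (f * g) = (algebraMap k[X] (RatFunc k) f.denom * f) *
      (algebraMap k[X] (RatFunc k) g.denom * g) by ring, algebraMap_denom_mul,
      algebraMap_denom_mul]
  rw [ordAt_spec (mul_ne_zero (RatFunc.num_ne_zero hf) (RatFunc.num_ne_zero hg))
    (mul_ne_zero f.denom_ne_zero g.denom_ne_zero) h1 a,
    rootMultiplicity_mul (mul_ne_zero (RatFunc.num_ne_zero hf) (RatFunc.num_ne_zero hg)),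
    rootMultiplicity_mul (mul_ne_zero f.denom_ne_zero g.denom_ne_zero)]
  unfold ordAt
  push_cast
  ring

lemma ordAt_one (a : k) : ordAt (1 : RatFunc k) a = 0 := by
  rw [← map_one (algebraMap k[X] (RatFunc k)), ordAt_algebraMap one_ne_zero]
  simp [rootMultiplicity_eq_zero (show ¬ IsRoot 1 a by simp [IsRoot])]

lemma ordAt_inv {f : RatFunc k} (hf : f ≠ 0) (a : k) : ordAt f⁻¹ a = -ordAt f a := by
  have := ordAt_mul hf (inv_ne_zero hf) a
  rw [mul_inv_cancel₀ hf, ordAt_one] at this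
  omega

lemma ordAt_pow {f : RatFunc k} (hf : f ≠ 0) (n : ℕ) (a : k) :
    ordAt (f ^ n) a = n * ordAt f a := by
  induction n with
  | zero => simpa using ordAt_one a
  | succ n ih =>
    rw [pow_succ, ordAt_mul (pow_ne_zero n hf) hf, ih]
    push_cast
    ring

lemma ordAt_zpow {f : RatFunc k} (hf : f ≠ 0) (n : ℤ) (a : k) :
    ordAt (f ^ n) a = n * ordAt f a := by
  cases n with
  | ofNat m => rw [Int.ofNat_eq_coe, zpow_natCast]; exact_mod_cast ordAt_pow hf m a
  | negSucc m =>
    rw [zpow_negSucc, ordAt_inv (pow_ne_zero _ hf), ordAt_pow hf, Int.negSucc_eq]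
    push_cast
    ring

lemma ordAt_C (c : k) (a : k) : ordAt (RatFunc.C c) a = 0 := by
  by_cases hc : c = 0
  · simp [hc, ordAt, RatFunc.num_zero, RatFunc.denom_zero]
  · rw [← RatFunc.algebraMap_C, ordAt_algebraMap (by simpa using hc)]
    simp [rootMultiplicity_eq_zero (show ¬ IsRoot (C c) a by simp [IsRoot, hc])]

lemma eq_C_of_ordAt_eq_zero [IsAlgClosed k] {f : RatFunc k} (hf : f ≠ 0)
    (h : ∀ a, ordAt f a = 0) : ∃ c : k, c ≠ 0 ∧ f = RatFunc.C c := by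
  obtain ⟨u, v, huv⟩ := f.isCoprime_num_denom
  have hno : ∀ a : k, ¬ (f.num.IsRoot a) := by
    intro a ha
    have h1 : 0 < f.num.rootMultiplicity a :=
      (rootMultiplicity_pos (RatFunc.num_ne_zero hf)).mpr ha
    have h2 : 0 < f.denom.rootMultiplicity a := by
      have := h a; unfold ordAt at this; omega
    have hd : f.denom.IsRoot a := (rootMultiplicity_pos f.denom_ne_zero).mp h2
    have := congrArg (eval a) huv
    simp [ha.eq_zero, hd.eq_zero] at this
  have hdeg : f.num.natDegree = 0 := by
    by_contra hne
    obtain ⟨a, ha⟩ := IsAlgClosed.exists_root f.num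
      (fun hd => hne (natDegree_eq_zero_iff_degree_le_zero.mpr (le_of_eq hd)))
    exact hno a ha
  have hdd : f.denom.natDegree = 0 := by
    by_contra hne
    obtain ⟨a, ha⟩ := IsAlgClosed.exists_root f.denom
      (fun hd => hne (natDegree_eq_zero_iff_degree_le_zero.mpr (le_of_eq hd)))
    have h2 : 0 < f.num.rootMultiplicity a := by
      have h1 : 0 < f.denom.rootMultiplicity a :=
        (rootMultiplicity_pos f.denom_ne_zero).mpr ha
      have := h a; unfold ordAt at this; omega
    exact hno a ((rootMultiplicity_pos (RatFunc.num_ne_zero hf)).mp h2)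
  have hden1 : f.denom = 1 := f.monic_denom.natDegree_eq_zero.mp hdd
  obtain ⟨c, hc⟩ := natDegree_eq_zero.mp hdeg
  refine ⟨c, ?_, ?_⟩
  · rintro rfl
    exact RatFunc.num_ne_zero hf (by simp [← hc])
  · rw [← RatFunc.num_div_denom f, hden1, ← hc, map_one, div_one, RatFunc.algebraMap_C]

lemma comp_ne_zero {p σ : k[X]} (hp : p ≠ 0) (hσ : 0 < σ.natDegree) : p.comp σ ≠ 0 := by
  intro h
  rcases comp_eq_zero_iff.mp h with h | ⟨_, h⟩
  · exact hp h
  · rw [h] at hσ; simp at hσ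

lemma rootMultiplicity_pow' {p : k[X]} (hp : p ≠ 0) (n : ℕ) (a : k) :
    rootMultiplicity a (p ^ n) = n * rootMultiplicity a p := by
  induction n with
  | zero => simp [rootMultiplicity_eq_zero (show ¬ IsRoot 1 a by simp [IsRoot])]
  | succ n ih =>
    rw [pow_succ, rootMultiplicity_mul (mul_ne_zero (pow_ne_zero n hp) hp), ih]
    ring

lemma rootMultiplicity_comp {p σ : k[X]} (hp : p ≠ 0) (hσ : 0 < σ.natDegree) (a : k) :
    rootMultiplicity a (p.comp σ) =
      rootMultiplicity (σ.eval a) p * rootMultiplicity a (σ - C (σ.eval a)) := by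
  set b := σ.eval a with hb
  set m := rootMultiplicity b p with hm
  set q := p /ₘ (X - C b) ^ m with hq
  have hfact : (X - C b) ^ m * q = p := pow_mul_divByMonic_rootMultiplicity_eq p b
  have hqb : q.eval b ≠ 0 := eval_divByMonic_pow_rootMultiplicity_ne_zero b hp
  have hq0 : q ≠ 0 := fun h => hqb (by simp [h])
  have hσb : σ - C b ≠ 0 := fun h => by
    have := natDegree_sub_C (p := σ) (a := b)
    rw [h, natDegree_zero] at this; omega
  have hcomp : p.comp σ = (σ - C b) ^ m * (q.comp σ) := by
    conv_lhs => rw [← hfact]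
    rw [mul_comp, pow_comp, sub_comp, X_comp, C_comp]
  rw [hcomp, rootMultiplicity_mul (mul_ne_zero (pow_ne_zero m hσb) (comp_ne_zero hq0 hσ)),
    rootMultiplicity_pow' hσb,
    rootMultiplicity_eq_zero (show ¬ IsRoot (q.comp σ) a by simp [IsRoot, eval_comp, ← hb, hqb]),
    add_zero, mul_comm]

lemma ordAt_ratComp {f : RatFunc k} {σ : k[X]} (hf : f ≠ 0) (hσ : 0 < σ.natDegree) (a : k) :
    ordAt (ratComp f σ) a =
      ordAt f (σ.eval a) * rootMultiplicity a (σ - C (σ.eval a)) := by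
  have hp : f.num.comp σ ≠ 0 := comp_ne_zero (RatFunc.num_ne_zero hf) hσ
  have hq : f.denom.comp σ ≠ 0 := comp_ne_zero f.denom_ne_zero hσ
  have hspec : algebraMap k[X] (RatFunc k) (f.denom.comp σ) * ratComp f σ
      = algebraMap k[X] (RatFunc k) (f.num.comp σ) := by
    unfold ratComp
    rw [← mul_div_assoc, mul_comm, mul_div_assoc,
      div_self (RatFunc.algebraMap_ne_zero hq), mul_one]
  rw [ordAt_spec hp hq hspec a, rootMultiplicity_comp (RatFunc.num_ne_zero hf) hσ,
    rootMultiplicity_comp f.denom_ne_zero hσ]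
  unfold ordAt
  push_cast
  ring

lemma ratComp_ne_zero {f : RatFunc k} {σ : k[X]} (hf : f ≠ 0) (hσ : 0 < σ.natDegree) :
    ratComp f σ ≠ 0 :=
  div_ne_zero (RatFunc.algebraMap_ne_zero (comp_ne_zero (RatFunc.num_ne_zero hf) hσ))
    (RatFunc.algebraMap_ne_zero (comp_ne_zero f.denom_ne_zero hσ))

lemma intDegree_div {x y : RatFunc k} (hx : x ≠ 0) (hy : y ≠ 0) :
    (x / y).intDegree = x.intDegree - y.intDegree := by
  have hinv : y⁻¹ ≠ 0 := inv_ne_zero hy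
  have h1 : (y * y⁻¹).intDegree = 0 := by rw [mul_inv_cancel₀ hy, RatFunc.intDegree_one]
  rw [RatFunc.intDegree_mul hy hinv] at h1
  rw [div_eq_mul_inv, RatFunc.intDegree_mul hx hinv]
  omega

lemma intDegree_ratComp {f : RatFunc k} {σ : k[X]} (hf : f ≠ 0) (hσ : 0 < σ.natDegree) :
    (ratComp f σ).intDegree = f.intDegree * σ.natDegree := by
  have hp : f.num.comp σ ≠ 0 := comp_ne_zero (RatFunc.num_ne_zero hf) hσ
  have hq : f.denom.comp σ ≠ 0 := comp_ne_zero f.denom_ne_zero hσ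
  unfold ratComp
  rw [intDegree_div (RatFunc.algebraMap_ne_zero hp) (RatFunc.algebraMap_ne_zero hq),
    RatFunc.intDegree_polynomial, RatFunc.intDegree_polynomial, natDegree_comp, natDegree_comp,
    RatFunc.intDegree]
  push_cast
  ring

lemma intDegree_zpow {x : RatFunc k} (hx : x ≠ 0) (n : ℤ) :
    (x ^ n).intDegree = n * x.intDegree := by
  have hpow : ∀ m : ℕ, (x ^ m).intDegree = m * x.intDegree := by
    intro m
    induction m with
    | zero => simpa using RatFunc.intDegree_one
    | succ m ih =>
      rw [pow_succ, RatFunc.intDegree_mul (pow_ne_zero m hx) hx, ih]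
      push_cast; ring
  cases n with
  | ofNat m => rw [Int.ofNat_eq_coe, zpow_natCast]; exact_mod_cast hpow m
  | negSucc m =>
    have h1 : (x ^ (m + 1) * (x ^ (m + 1))⁻¹).intDegree = 0 := by
      rw [mul_inv_cancel₀ (pow_ne_zero _ hx), RatFunc.intDegree_one]
    rw [RatFunc.intDegree_mul (pow_ne_zero _ hx) (inv_ne_zero (pow_ne_zero _ hx))] at h1
    rw [zpow_negSucc, Int.negSucc_eq]
    have := hpow (m + 1)
    push_cast at this ⊢
    linarith

lemma sum_count_le_card [DecidableEq k] {S : Finset k} (m : Multiset k) : ∑ a ∈ S, m.count a ≤ Multiset.card m := by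
  classical
  have h1 : ∑ a ∈ S, m.count a = ∑ a ∈ S ∩ m.toFinset, m.count a := by
    refine (Finset.sum_subset Finset.inter_subset_left ?_).symm
    intro x hx hnx
    rw [Multiset.count_eq_zero]
    intro hmem
    exact hnx (Finset.mem_inter.mpr ⟨hx, Multiset.mem_toFinset.mpr hmem⟩)
  rw [h1]
  calc ∑ a ∈ S ∩ m.toFinset, m.count a ≤ ∑ a ∈ m.toFinset, m.count a :=
        Finset.sum_le_sum_of_subset Finset.inter_subset_right
    _ = Multiset.card m := m.toFinset_sum_count_eq

lemma sum_rm_le {p : k[X]} (hp : p ≠ 0) (S : Finset k) :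
    ∑ a ∈ S, p.rootMultiplicity a ≤ p.natDegree := by
  classical
  calc ∑ a ∈ S, p.rootMultiplicity a = ∑ a ∈ S, p.roots.count a := by
        refine Finset.sum_congr rfl fun a _ => ?_
        rw [count_roots]
    _ ≤ Multiset.card p.roots := sum_count_le_card _
    _ ≤ p.natDegree := p.card_roots'

lemma sum_rm_roots [DecidableEq k] [IsAlgClosed k] {p : k[X]} (hp : p ≠ 0) :
    ∑ a ∈ p.roots.toFinset, p.rootMultiplicity a = p.natDegree := by
  classical
  have h1 : ∑ a ∈ p.roots.toFinset, p.roots.count a = Multiset.card p.roots :=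
    p.roots.toFinset_sum_count_eq
  have h2 : Multiset.card p.roots = p.natDegree :=
    (splits_iff_card_roots).mp (IsAlgClosed.splits p)
  rw [← h2, ← h1]
  refine Finset.sum_congr rfl fun a _ => ?_
  rw [count_roots]

lemma mem_preimage_iff [DecidableEq k] {σ : k[X]} (hσ : 0 < σ.natDegree) {y a : k} :
    a ∈ (σ - C y).roots.toFinset ↔ σ.eval a = y := by
  have hne : σ - C y ≠ 0 := fun h => by
    have := natDegree_sub_C (p := σ) (a := y)
    rw [h, natDegree_zero] at this; omega
  rw [Multiset.mem_toFinset, mem_roots hne]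
  simp [IsRoot, sub_eq_zero]

lemma derivative_facts {σ : k[X]} (h₁ : 0 < σ.natDegree) (ht : ¬ ringChar k ∣ σ.natDegree) :
    derivative σ ≠ 0 ∧ (derivative σ).natDegree = σ.natDegree - 1 := by
  have hdk : ((σ.natDegree : k)) ≠ 0 := fun h => ht ((ringChar.spec k _).mp h)
  have hσ0 : σ ≠ 0 := fun h => by simp [h] at h₁
  have hcast : ((σ.natDegree - 1 : ℕ) : k) + 1 = (σ.natDegree : k) := by
    rw [Nat.cast_sub h₁]; ring
  have hco : (derivative σ).coeff (σ.natDegree - 1) ≠ 0 := by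
    rw [coeff_derivative, show σ.natDegree - 1 + 1 = σ.natDegree by omega, coeff_natDegree,
      hcast]
    exact mul_ne_zero (leadingCoeff_ne_zero.mpr hσ0) hdk
  have hne : derivative σ ≠ 0 := fun h => hco (by rw [h, coeff_zero])
  exact ⟨hne, le_antisymm (natDegree_derivative_le σ) (le_natDegree_of_ne_zero hco)⟩

lemma rm_derivative {σ : k[X]} (h₁ : 0 < σ.natDegree)
    (ht : ∀ c a : k, (σ - C c).IsRoot a → ¬ (ringChar k ∣ (σ - C c).rootMultiplicity a)) (a : k) :
    rootMultiplicity a (derivative σ) + 1 = rootMultiplicity a (σ - C (σ.eval a)) := by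
  set τ := σ - C (σ.eval a) with hτ
  have hτ0 : τ ≠ 0 := fun h => by
    have := natDegree_sub_C (p := σ) (a := σ.eval a)
    rw [← hτ, h, natDegree_zero] at this; omega
  have hroot : τ.IsRoot a := by simp [hτ, IsRoot]
  have hrpos : 0 < rootMultiplicity a τ := (rootMultiplicity_pos hτ0).mpr hroot
  have hchar : ¬ ringChar k ∣ rootMultiplicity a τ := ht _ a hroot
  obtain ⟨s, hs⟩ : ∃ s, rootMultiplicity a τ = s + 1 :=
    ⟨rootMultiplicity a τ - 1, by omega⟩
  rw [hs] at hchar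
  have hrk : ((s + 1 : ℕ) : k) ≠ 0 := fun h => hchar ((ringChar.spec k _).mp h)
  set u := τ /ₘ (X - C a) ^ (s + 1) with hu
  have hfact : (X - C a) ^ (s + 1) * u = τ := by
    rw [hu, ← hs]; exact pow_mul_divByMonic_rootMultiplicity_eq τ a
  have hua : u.eval a ≠ 0 := by
    rw [hu, ← hs]; exact eval_divByMonic_pow_rootMultiplicity_ne_zero a hτ0
  set w := C ((s + 1 : ℕ) : k) * u + (X - C a) * derivative u with hw
  have hwa : w.eval a ≠ 0 := by
    rw [hw]
    simpa using mul_ne_zero hrk hua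
  have hw0 : w ≠ 0 := fun h => hwa (by rw [h, eval_zero])
  have hdτ : derivative σ = (X - C a) ^ s * w := by
    have h1 : derivative σ = derivative τ := by
      rw [hτ, derivative_sub, derivative_C, sub_zero]
    rw [h1, ← hfact, derivative_mul, derivative_pow, derivative_X_sub_C, Nat.add_sub_cancel, hw]
    ring
  rw [hdτ, rootMultiplicity_mul (mul_ne_zero (pow_ne_zero s (X_sub_C_ne_zero a)) hw0),
    rootMultiplicity_X_sub_C_pow,
    rootMultiplicity_eq_zero (show ¬ IsRoot w a from hwa), add_zero, hs]

lemma sub_C_ne_zero {σ : k[X]} (h₁ : 0 < σ.natDegree) (y : k) : σ - C y ≠ 0 := fun h => by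
  have := natDegree_sub_C (p := σ) (a := y)
  rw [h, natDegree_zero] at this; omega

lemma rm_self_pos {σ : k[X]} (h₁ : 0 < σ.natDegree) (a : k) :
    0 < rootMultiplicity a (σ - C (σ.eval a)) :=
  (rootMultiplicity_pos (sub_C_ne_zero h₁ _)).mpr (by simp [IsRoot])

lemma no_pos [DecidableEq k] [IsAlgClosed k] {σ₁ σ₂ : k[X]}
    (h₁ : 0 < σ₁.natDegree) (h₂ : 0 < σ₂.natDegree)
    (hdeg : σ₂.natDegree < σ₁.natDegree) {f : RatFunc k} {ν : ℤ} (hν : 1 ≤ ν)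
    {y y' : k} {E E' : ℤ} (hE : 1 ≤ E) (hsum : E + E' = -ν)
    (hOy : ordAt f y = E) (hOy' : ordAt f y' = E')
    (hO0 : ∀ b, b ≠ y → b ≠ y' → ordAt f b = 0)
    (K : ∀ a : k, (ordAt f (σ₁.eval a) + ν) * (rootMultiplicity a (σ₁ - C (σ₁.eval a)) : ℤ)
        = (ordAt f (σ₂.eval a) + ν) * (rootMultiplicity a (σ₂ - C (σ₂.eval a)) : ℤ)) :
    False := by
  set P := (σ₁ - C y').roots.toFinset with hP
  have key : ∀ a ∈ P, rootMultiplicity a (σ₁ - C y') = rootMultiplicity a (σ₂ - C y') := by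
    intro a haP
    have hev : σ₁.eval a = y' := (mem_preimage_iff h₁).mp haP
    have hKa := K a
    rw [hev, hOy'] at hKa
    have hr₁ : 0 < rootMultiplicity a (σ₁ - C (σ₁.eval a)) := rm_self_pos h₁ a
    have hr₂ : 0 < rootMultiplicity a (σ₂ - C (σ₂.eval a)) := rm_self_pos h₂ a
    rw [hev] at hr₁
    have hneg : (E' + ν) * (rootMultiplicity a (σ₁ - C y') : ℤ) < 0 := by
      apply mul_neg_of_neg_of_pos (by omega) (by exact_mod_cast hr₁)
    have hev2 : σ₂.eval a = y' := by
      by_contra hne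
      have hO2 : 0 ≤ ordAt f (σ₂.eval a) + ν := by
        by_cases hcase : σ₂.eval a = y
        · rw [hcase, hOy]; omega
        · rw [hO0 _ hcase hne]; omega
      have : 0 ≤ (ordAt f (σ₂.eval a) + ν) * (rootMultiplicity a (σ₂ - C (σ₂.eval a)) : ℤ) :=
        mul_nonneg hO2 (by positivity)
      omega
    rw [hev2, hOy'] at hKa
    have hcancel := mul_left_cancel₀ (show (E' + ν) ≠ 0 by omega) hKa
    rw [hev2] at hr₂
    exact_mod_cast hcancel
  have hsum1 : ∑ a ∈ P, rootMultiplicity a (σ₁ - C y') = σ₁.natDegree := by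
    rw [← natDegree_sub_C (p := σ₁) (a := y')]
    exact sum_rm_roots (sub_C_ne_zero h₁ y')
  have hsum2 : ∑ a ∈ P, rootMultiplicity a (σ₂ - C y') ≤ σ₂.natDegree := by
    rw [← natDegree_sub_C (p := σ₂) (a := y')]
    exact sum_rm_le (sub_C_ne_zero h₂ y') P
  rw [Finset.sum_congr rfl key] at hsum1
  omega

end Aux

/-- if `d₁ ≥ 14·d₂` and a semi-invariant form of weight `ν ≥ 1` has conductor
exactly `2`, with coprime orders `e = ord_{y₁} f` and `e' = ord_{y₂} f` at the two points of
its support, then `e = e' = −1`; consequently `ν = 2` and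
`f = c·((t − y₁)(t − y₂))⁻¹` for some nonzero constant `c`. -/
theorem conductor_two_primitive_flat
    {k : Type*} [Field k] [IsAlgClosed k] (σ₁ σ₂ : k[X])
    (h₁ : 0 < σ₁.natDegree) (h₂ : 0 < σ₂.natDegree)
    (ht₁ : TamelyRamified σ₁) (ht₂ : TamelyRamified σ₂)
    (hdeg : 14 * σ₂.natDegree ≤ σ₁.natDegree)
    (ν : ℤ) (hν : 1 ≤ ν) (f : RatFunc k) (hf : SemiInvariant σ₁ σ₂ f ν)
    (y₁ y₂ : k) (hy : y₁ ≠ y₂)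
    (hsupp : {x : k | ordAt f x ≠ 0} = {y₁, y₂})
    (e e' : ℤ) (he : ordAt f y₁ = e) (he' : ordAt f y₂ = e')
    (hcop : IsCoprime e e') :
    e = -1 ∧ e' = -1 ∧ ν = 2 ∧ ∃ c : k, c ≠ 0 ∧
      f = RatFunc.C c * (algebraMap k[X] (RatFunc k) ((X - C y₁) * (X - C y₂)))⁻¹ := by
  classical
  obtain ⟨hf0, lam, hlam, heq⟩ := hf
  obtain ⟨hc1, hd1deg⟩ := derivative_facts h₁ ht₁.1
  obtain ⟨hc2, hd2deg⟩ := derivative_facts h₂ ht₂.1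
  have hO0 : ∀ b : k, b ≠ y₁ → b ≠ y₂ → ordAt f b = 0 := by
    intro b hb1 hb2
    by_contra h
    have : b ∈ ({y₁, y₂} : Set k) := by rw [← hsupp]; exact h
    simp [hb1, hb2] at this
  have he0 : e ≠ 0 := by
    have : y₁ ∈ {x : k | ordAt f x ≠ 0} := by rw [hsupp]; left; rfl
    rw [Set.mem_setOf_eq, he] at this; exact this
  have he'0 : e' ≠ 0 := by
    have : y₂ ∈ {x : k | ordAt f x ≠ 0} := by rw [hsupp]; right; rfl
    rw [Set.mem_setOf_eq, he'] at this; exact this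
  have hClam : RatFunc.C lam ≠ 0 := by
    rw [← RatFunc.algebraMap_C]
    exact RatFunc.algebraMap_ne_zero (by simpa using hlam)
  -- the pointwise key equation
  have K : ∀ a : k,
      (ordAt f (σ₁.eval a) + ν) * (rootMultiplicity a (σ₁ - C (σ₁.eval a)) : ℤ)
        = (ordAt f (σ₂.eval a) + ν) * (rootMultiplicity a (σ₂ - C (σ₂.eval a)) : ℤ) := by
    intro a
    have h := congrArg (fun x => ordAt x a) heq
    rw [ordAt_mul (ratComp_ne_zero hf0 h₁) (zpow_ne_zero ν (RatFunc.algebraMap_ne_zero hc1)),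
      ordAt_mul hClam (mul_ne_zero (ratComp_ne_zero hf0 h₂)
        (zpow_ne_zero ν (RatFunc.algebraMap_ne_zero hc2))),
      ordAt_mul (ratComp_ne_zero hf0 h₂) (zpow_ne_zero ν (RatFunc.algebraMap_ne_zero hc2)),
      ordAt_C, ordAt_ratComp hf0 h₁, ordAt_ratComp hf0 h₂,
      ordAt_zpow (RatFunc.algebraMap_ne_zero hc1), ordAt_zpow (RatFunc.algebraMap_ne_zero hc2),
      ordAt_algebraMap hc1, ordAt_algebraMap hc2] at h
    have hm1 := rm_derivative h₁ ht₁.2 a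
    have hm2 := rm_derivative h₂ ht₂.2 a
    have hm1' : (rootMultiplicity a (derivative σ₁) : ℤ)
        = (rootMultiplicity a (σ₁ - C (σ₁.eval a)) : ℤ) - 1 := by omega
    have hm2' : (rootMultiplicity a (derivative σ₂) : ℤ)
        = (rootMultiplicity a (σ₂ - C (σ₂.eval a)) : ℤ) - 1 := by omega
    rw [hm1', hm2'] at h
    linear_combination h
  -- closed form of f
  have hXY1 : (algebraMap k[X] (RatFunc k) (X - C y₁)) ≠ 0 :=
    RatFunc.algebraMap_ne_zero (X_sub_C_ne_zero y₁)
  have hXY2 : (algebraMap k[X] (RatFunc k) (X - C y₂)) ≠ 0 :=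
    RatFunc.algebraMap_ne_zero (X_sub_C_ne_zero y₂)
  set g : RatFunc k := (algebraMap k[X] (RatFunc k) (X - C y₁)) ^ e
      * (algebraMap k[X] (RatFunc k) (X - C y₂)) ^ e' with hg
  have hg0 : g ≠ 0 := mul_ne_zero (zpow_ne_zero _ hXY1) (zpow_ne_zero _ hXY2)
  have hordg : ∀ a : k, ordAt g a = ordAt f a := by
    intro a
    rw [hg, ordAt_mul (zpow_ne_zero _ hXY1) (zpow_ne_zero _ hXY2),
      ordAt_zpow hXY1, ordAt_zpow hXY2, ordAt_algebraMap (X_sub_C_ne_zero y₁),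
      ordAt_algebraMap (X_sub_C_ne_zero y₂), rootMultiplicity_X_sub_C,
      rootMultiplicity_X_sub_C]
    by_cases h1 : a = y₁
    · subst h1
      rw [he, if_pos rfl, if_neg hy]
      simp
    · by_cases h2 : a = y₂
      · subst h2
        rw [he', if_neg h1, if_pos rfl]
        simp
      · rw [hO0 a h1 h2, if_neg h1, if_neg h2]
        simp
  obtain ⟨c, hc0, hcf⟩ : ∃ c : k, c ≠ 0 ∧ f * g⁻¹ = RatFunc.C c := by
    have := eq_C_of_ordAt_eq_zero (mul_ne_zero hf0 (inv_ne_zero hg0))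
      (fun a => by rw [ordAt_mul hf0 (inv_ne_zero hg0), ordAt_inv hg0, hordg]; ring)
    exact this
  have hfc : f = RatFunc.C c * g := by
    rw [← hcf]; field_simp
  -- degree equation at infinity
  have hint : f.intDegree = e + e' := by
    rw [hfc, RatFunc.intDegree_mul (by rw [← hcf]; exact mul_ne_zero hf0 (inv_ne_zero hg0)) hg0,
      hg, RatFunc.intDegree_mul (zpow_ne_zero _ hXY1) (zpow_ne_zero _ hXY2),
      intDegree_zpow hXY1, intDegree_zpow hXY2, RatFunc.intDegree_C,
      RatFunc.intDegree_polynomial, RatFunc.intDegree_polynomial, natDegree_X_sub_C, natDegree_X_sub_C]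
    ring
  have hsum : e + e' = -ν := by
    have h := congrArg RatFunc.intDegree heq
    rw [RatFunc.intDegree_mul (ratComp_ne_zero hf0 h₁)
        (zpow_ne_zero ν (RatFunc.algebraMap_ne_zero hc1)),
      RatFunc.intDegree_mul hClam (mul_ne_zero (ratComp_ne_zero hf0 h₂)
        (zpow_ne_zero ν (RatFunc.algebraMap_ne_zero hc2))),
      RatFunc.intDegree_mul (ratComp_ne_zero hf0 h₂)
        (zpow_ne_zero ν (RatFunc.algebraMap_ne_zero hc2)),
      RatFunc.intDegree_C, intDegree_ratComp hf0 h₁, intDegree_ratComp hf0 h₂,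
      intDegree_zpow (RatFunc.algebraMap_ne_zero hc1),
      intDegree_zpow (RatFunc.algebraMap_ne_zero hc2),
      RatFunc.intDegree_polynomial, RatFunc.intDegree_polynomial, hint,
      hd1deg, hd2deg] at h
    have hcast1 : ((σ₁.natDegree - 1 : ℕ) : ℤ) = (σ₁.natDegree : ℤ) - 1 := by
      rw [Nat.cast_sub h₁]; simp
    have hcast2 : ((σ₂.natDegree - 1 : ℕ) : ℤ) = (σ₂.natDegree : ℤ) - 1 := by
      rw [Nat.cast_sub h₂]; simp
    rw [hcast1, hcast2] at h
    have hd : (σ₂.natDegree : ℤ) < (σ₁.natDegree : ℤ) := by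
      have : σ₂.natDegree < σ₁.natDegree := by omega
      exact_mod_cast this
    have hfac : (e + e' + ν) * ((σ₁.natDegree : ℤ) - σ₂.natDegree) = 0 := by
      linear_combination h
    rcases mul_eq_zero.mp hfac with h' | h'
    · omega
    · omega
  -- neither order is positive
  have hdlt : σ₂.natDegree < σ₁.natDegree := by omega
  have heneg : e ≤ -1 := by
    rcases lt_or_ge e 0 with h | h
    · omega
    · exact absurd (no_pos h₁ h₂ hdlt hν (by omega) hsum he he' hO0 K) (by simp)
  have he'neg : e' ≤ -1 := by
    rcases lt_or_ge e' 0 with h | h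
    · omega
    · refine absurd (no_pos h₁ h₂ hdlt hν (by omega) (by omega) he' he
        (fun b hb2 hb1 => hO0 b hb1 hb2) K) (by simp)
  -- counting part
  set T : Finset k := ((σ₂ - C y₁).roots.toFinset ∪ (σ₂ - C y₂).roots.toFinset)
      ∪ (derivative σ₂).roots.toFinset with hT
  have hTcard : T.card ≤ 3 * σ₂.natDegree := by
    have t1 : (σ₂ - C y₁).roots.toFinset.card ≤ σ₂.natDegree := by
      calc (σ₂ - C y₁).roots.toFinset.card ≤ Multiset.card (σ₂ - C y₁).roots :=
            Multiset.toFinset_card_le _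
        _ ≤ (σ₂ - C y₁).natDegree := (σ₂ - C y₁).card_roots'
        _ = σ₂.natDegree := natDegree_sub_C
    have t2 : (σ₂ - C y₂).roots.toFinset.card ≤ σ₂.natDegree := by
      calc (σ₂ - C y₂).roots.toFinset.card ≤ Multiset.card (σ₂ - C y₂).roots :=
            Multiset.toFinset_card_le _
        _ ≤ (σ₂ - C y₂).natDegree := (σ₂ - C y₂).card_roots'
        _ = σ₂.natDegree := natDegree_sub_C
    have t3 : (derivative σ₂).roots.toFinset.card ≤ σ₂.natDegree := by
      calc (derivative σ₂).roots.toFinset.card ≤ Multiset.card (derivative σ₂).roots :=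
            Multiset.toFinset_card_le _
        _ ≤ (derivative σ₂).natDegree := (derivative σ₂).card_roots'
        _ ≤ σ₂.natDegree := by omega
    have u1 := Finset.card_union_le ((σ₂ - C y₁).roots.toFinset ∪ (σ₂ - C y₂).roots.toFinset)
      (derivative σ₂).roots.toFinset
    have u2 := Finset.card_union_le (σ₂ - C y₁).roots.toFinset (σ₂ - C y₂).roots.toFinset
    rw [hT]
    omega
  have hsum₁ : ∑ a ∈ (σ₁ - C y₁).roots.toFinset, rootMultiplicity a (σ₁ - C y₁)
      = σ₁.natDegree := by
    rw [← natDegree_sub_C (p := σ₁) (a := y₁)]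
    exact sum_rm_roots (sub_C_ne_zero h₁ y₁)
  have hsum₂ : ∑ a ∈ (σ₁ - C y₂).roots.toFinset, rootMultiplicity a (σ₁ - C y₂)
      = σ₁.natDegree := by
    rw [← natDegree_sub_C (p := σ₁) (a := y₂)]
    exact sum_rm_roots (sub_C_ne_zero h₁ y₂)
  have hram : ∀ y : k, ∑ a ∈ (σ₁ - C y).roots.toFinset, rootMultiplicity a (σ₁ - C y)
      = ∑ a ∈ (σ₁ - C y).roots.toFinset, rootMultiplicity a (derivative σ₁)
        + (σ₁ - C y).roots.toFinset.card := by
    intro y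
    have hstep : ∀ a ∈ (σ₁ - C y).roots.toFinset,
        rootMultiplicity a (σ₁ - C y) = rootMultiplicity a (derivative σ₁) + 1 := by
      intro a ha
      have hev : σ₁.eval a = y := (mem_preimage_iff h₁).mp ha
      have h := rm_derivative h₁ ht₁.2 a
      rw [hev] at h
      omega
    rw [Finset.sum_congr rfl hstep, Finset.sum_add_distrib, Finset.sum_const, smul_eq_mul,
      mul_one]
  have hdisj : Disjoint (σ₁ - C y₁).roots.toFinset (σ₁ - C y₂).roots.toFinset := by
    rw [Finset.disjoint_left]
    intro a ha1 ha2
    exact hy (((mem_preimage_iff h₁).mp ha1).symm.trans ((mem_preimage_iff h₁).mp ha2))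
  have hbudget : ∑ a ∈ (σ₁ - C y₁).roots.toFinset, rootMultiplicity a (derivative σ₁)
      + ∑ a ∈ (σ₁ - C y₂).roots.toFinset, rootMultiplicity a (derivative σ₁)
      ≤ σ₁.natDegree - 1 := by
    rw [← Finset.sum_union hdisj, ← hd1deg]
    exact sum_rm_le hc1 _
  have hnm : σ₁.natDegree + 1
      ≤ (σ₁ - C y₁).roots.toFinset.card + (σ₁ - C y₂).roots.toFinset.card := by
    have q1 := hram y₁
    have q2 := hram y₂
    omega
  -- good points
  have good : ∀ (y : k) (cY : ℤ), ordAt f y + ν = cY → 1 ≤ cY → cY < ν →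
      2 * ((σ₁ - C y).roots.toFinset.card - T.card) ≤ σ₁.natDegree ∧
      (T.card < (σ₁ - C y).roots.toFinset.card → cY ∣ ν) := by
    intro y cY hcY h1c h2c
    have hgood : ∀ a ∈ (σ₁ - C y).roots.toFinset \ T,
        cY * (rootMultiplicity a (σ₁ - C y) : ℤ) = ν := by
      intro a ha
      obtain ⟨haP, haT⟩ := Finset.mem_sdiff.mp ha
      have hev : σ₁.eval a = y := (mem_preimage_iff h₁).mp haP
      have hT1 : a ∉ (σ₂ - C y₁).roots.toFinset := fun h => haT (by
        rw [hT]; exact Finset.mem_union_left _ (Finset.mem_union_left _ h))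
      have hT2 : a ∉ (σ₂ - C y₂).roots.toFinset := fun h => haT (by
        rw [hT]; exact Finset.mem_union_left _ (Finset.mem_union_right _ h))
      have hT3 : a ∉ (derivative σ₂).roots.toFinset := fun h => haT (by
        rw [hT]; exact Finset.mem_union_right _ h)
      have hO2 : ordAt f (σ₂.eval a) = 0 :=
        hO0 _ (fun h => hT1 ((mem_preimage_iff h₂).mpr h))
          (fun h => hT2 ((mem_preimage_iff h₂).mpr h))
      have hrm2 : rootMultiplicity a (σ₂ - C (σ₂.eval a)) = 1 := by
        have hz : rootMultiplicity a (derivative σ₂) = 0 := by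
          apply rootMultiplicity_eq_zero
          intro hroot
          exact hT3 (Multiset.mem_toFinset.mpr ((mem_roots hc2).mpr hroot))
        have := rm_derivative h₂ ht₂.2 a
        omega
      have hKa := K a
      rw [hev, hO2, hrm2] at hKa
      rw [← hcY]
      push_cast at hKa ⊢
      linarith
    constructor
    · have h2le : ∀ a ∈ (σ₁ - C y).roots.toFinset \ T, 2 ≤ rootMultiplicity a (σ₁ - C y) := by
        intro a ha
        have h := hgood a ha
        have hpos : 0 < rootMultiplicity a (σ₁ - C y) := by
          apply (rootMultiplicity_pos (sub_C_ne_zero h₁ y)).mpr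
          exact (mem_roots (sub_C_ne_zero h₁ y)).mp
            (Multiset.mem_toFinset.mp (Finset.mem_sdiff.mp ha).1)
        by_contra hlt
        push_neg at hlt
        have h1 : rootMultiplicity a (σ₁ - C y) = 1 := by omega
        rw [h1] at h
        push_cast at h
        omega
      have hsle : ∑ a ∈ (σ₁ - C y).roots.toFinset \ T, rootMultiplicity a (σ₁ - C y)
          ≤ σ₁.natDegree := by
        have := sum_rm_le (sub_C_ne_zero h₁ y) ((σ₁ - C y).roots.toFinset \ T)
        rwa [natDegree_sub_C] at this
      have h2G := Finset.card_nsmul_le_sum ((σ₁ - C y).roots.toFinset \ T)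
        (fun a => rootMultiplicity a (σ₁ - C y)) 2 h2le
      have hGc := Finset.le_card_sdiff T (σ₁ - C y).roots.toFinset
      rw [smul_eq_mul] at h2G
      omega
    · intro hlt
      have hne : ((σ₁ - C y).roots.toFinset \ T).Nonempty := by
        apply Finset.card_pos.mp
        have := Finset.le_card_sdiff T (σ₁ - C y).roots.toFinset
        omega
      obtain ⟨a, ha⟩ := hne
      exact ⟨_, (hgood a ha).symm⟩
  obtain ⟨bound₁, div₁⟩ := good y₁ (e + ν) (by rw [he]) (by omega) (by omega)
  obtain ⟨bound₂, div₂⟩ := good y₂ (e' + ν) (by rw [he']) (by omega) (by omega)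
  have hTlt₁ : T.card < (σ₁ - C y₁).roots.toFinset.card := by omega
  have hTlt₂ : T.card < (σ₁ - C y₂).roots.toFinset.card := by omega
  have hdvd₁ : (e + ν) ∣ ν := div₁ hTlt₁
  have hdvd₂ : (e' + ν) ∣ ν := div₂ hTlt₂
  -- conclude e = e'
  have hdv1 : (e + ν) ∣ (e' + ν) := by
    have := dvd_sub hdvd₁ (dvd_refl (e + ν))
    have heq2 : ν - (e + ν) = e' + ν := by omega
    rwa [heq2] at this
  have hdv2 : (e' + ν) ∣ (e + ν) := by
    have := dvd_sub hdvd₂ (dvd_refl (e' + ν))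
    have heq2 : ν - (e' + ν) = e + ν := by omega
    rwa [heq2] at this
  have hee' : e = e' := by
    have := Int.dvd_antisymm (by omega) (by omega) hdv1 hdv2
    omega
  have hunit : IsUnit e := isCoprime_self.mp (by rwa [← hee'] at hcop)
  have he1 : e = -1 := by
    rcases Int.isUnit_iff.mp hunit with h | h
    · omega
    · exact h
  have he'1 : e' = -1 := by omega
  refine ⟨he1, he'1, by omega, c, hc0, ?_⟩
  rw [hfc, hg, he1, he'1, zpow_neg_one, zpow_neg_one, ← mul_inv, ← map_mul]
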